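/- Let p ≥ 2, 1 ≤ t ≤ p, n ≥ 0 be integers and let e_1, …, e_{p+1} be nonnegative integers with e_1 ≥ 1. Then the number of (p+1)-tuples (T_1, …, T_{p+1}) of sets with T_1, …, T_t ⊆ [1,n+1], T_{t+1}, …, T_{p+1} ⊆ [1,n], |T_i| = e_i for all i, T_{k+1} ⊆ T_k for all 1 ≤ k ≤ p, and {k+1 : k ∈ T_{p+1}} ⊆ T_1, equals C(e_1−1, e_{p+1})·C(n+1−e_t, e_1−e_t)·C(n+1−e_{t+1}, e_t−e_{t+1})·C(n−e_{p+1}, e_{t+1}−e_{p+1})·χ_e([1,t])·χ_e([t+1,p+1]). -/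

import Mathlib

/-- Binomial coefficient `C(a,b)` for integers, with the convention that it is `0`
when `a < 0` or `b < 0` (and, as usual, when `b > a`), and `C(a,0) = 1` for `a ≥ 0`. -/
def intChoose (a b : ℤ) : ℕ :=
  if 0 ≤ a ∧ 0 ≤ b then a.toNat.choose b.toNat else 0

/-- `χ_e([r,s]) = ∏_{k=r}^{s−2} C(e_k − e_s, e_{k+1} − e_s)`, the empty product
being `1`. -/
def chiE (e : ℕ → ℕ) (r s : ℕ) : ℕ :=
  ∏ k ∈ Finset.Icc r (s - 2), intChoose ((e k : ℤ) - (e s : ℤ)) ((e (k + 1) : ℤ) - (e s : ℤ))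

open Finset

noncomputable local instance : DecidableEq (ℕ → Finset ℕ) := Classical.decEq _

lemma card_nbij'_old {α β : Type*} {s : Finset α} {t : Finset β} (i : α → β) (j : β → α)
    (hi : ∀ a ∈ s, i a ∈ t) (hj : ∀ a ∈ t, j a ∈ s)
    (left_inv : ∀ a ∈ s, j (i a) = a) (right_inv : ∀ a ∈ t, i (j a) = a) : #s = #t :=
  Finset.card_nbij' i j (fun a ha => hi a ha) (fun a ha => hj a ha)
    (fun a ha => left_inv a ha) (fun a ha => right_inv a ha)

lemma intChoose_def {a b : ℤ} (ha : 0 ≤ a) (hb : 0 ≤ b) :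
    intChoose a b = a.toNat.choose b.toNat := if_pos ⟨ha, hb⟩

lemma intChoose_natCast (x y : ℕ) : intChoose x y = x.choose y := by
  simp [intChoose]

lemma intChoose_of_neg_left {a b : ℤ} (h : a < 0) : intChoose a b = 0 := by
  simp only [intChoose, ite_eq_right_iff]; intro hc; omega

lemma intChoose_of_neg_right {a b : ℤ} (h : b < 0) : intChoose a b = 0 := by
  simp only [intChoose, ite_eq_right_iff]; intro hc; omega

lemma intChoose_zero_right {a : ℤ} (h : 0 ≤ a) : intChoose a 0 = 1 := by
  rw [intChoose_def h le_rfl]; simp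

lemma intChoose_of_lt {a b : ℤ} (h : a < b) : intChoose a b = 0 := by
  rcases lt_or_ge a 0 with h' | h'
  · exact intChoose_of_neg_left h'
  · have hb : 0 ≤ b := le_of_lt (lt_of_le_of_lt h' h)
    rw [intChoose_def h' hb]
    exact Nat.choose_eq_zero_of_lt (by omega)

lemma intChoose_pascal (n k : ℤ) (hn : 0 ≤ n) :
    intChoose (n + 1) k = intChoose n (k - 1) + intChoose n k := by
  rcases lt_trichotomy k 0 with hk | hk | hk
  · rw [intChoose_of_neg_right hk, intChoose_of_neg_right (by omega : k - 1 < 0),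
      intChoose_of_neg_right hk]
  · subst hk
    rw [intChoose_zero_right (by omega), intChoose_of_neg_right (by omega : (0:ℤ) - 1 < 0),
      intChoose_zero_right hn]
  · rw [intChoose_def (by omega) (le_of_lt hk), intChoose_def hn (by omega),
      intChoose_def hn (le_of_lt hk)]
    have h1 : (n+1).toNat = n.toNat + 1 := by omega
    have h2 : k.toNat = (k-1).toNat + 1 := by omega
    rw [h1, h2, Nat.choose_succ_succ']

lemma intChoose_trinomial (n k j : ℤ) :
    intChoose n k * intChoose k j = intChoose n j * intChoose (n - j) (k - j) := by
  rcases lt_or_ge j 0 with hj | hj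
  · rw [intChoose_of_neg_right hj, intChoose_of_neg_right hj, mul_zero, zero_mul]
  rcases lt_or_ge k 0 with hk | hk
  · rw [intChoose_of_neg_left hk, intChoose_of_neg_right (by omega : k - j < 0), mul_zero, mul_zero]
  rcases lt_or_ge n 0 with hn | hn
  · rw [intChoose_of_neg_left hn, intChoose_of_neg_left hn, zero_mul, zero_mul]
  rcases lt_or_ge n k with hnk | hnk
  · rw [intChoose_of_lt hnk, zero_mul]
    rcases le_or_gt j n with hjn | hjn
    · rw [intChoose_of_lt (show n - j < k - j by omega), mul_zero]
    · rw [intChoose_of_lt hjn, zero_mul]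
  rcases lt_or_ge k j with hkj | hkj
  · rw [intChoose_of_lt hkj, mul_zero, intChoose_of_neg_right (by omega : k - j < 0), mul_zero]
  · rw [intChoose_def hn hk, intChoose_def hk hj, intChoose_def hn hj,
      intChoose_def (by omega) (by omega)]
    have h1 : (n - j).toNat = n.toNat - j.toNat := by omega
    have h2 : (k - j).toNat = k.toNat - j.toNat := by omega
    rw [h1, h2]
    exact Nat.choose_mul (by omega)

lemma alg_RS (A D M : ℤ) (hA : 2 ≤ A) :
    intChoose (A-2) (D-1) * intChoose (M-D) (A-1-D) + intChoose (A-2) D * intChoose (M-D) (A-1-D)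
      = intChoose (A-1) D * intChoose (M-D) (A-1-D) := by
  rw [← add_mul]
  congr 1
  have h := intChoose_pascal (A-2) D (by omega)
  rw [show A-2+1 = A-1 by ring] at h
  rw [h]

lemma alg_SP (A D M : ℤ) (hM : 0 ≤ M) :
    intChoose (A-1) D * intChoose (M-D) (A-D) + intChoose (A-1) D * intChoose (M-D) (A-1-D)
      = intChoose (A-1) D * intChoose (M+1-D) (A-D) := by
  rcases le_or_gt D M with h | h
  · rw [← mul_add]
    congr 1
    rw [show M+1-D = (M-D)+1 by ring, intChoose_pascal (M-D) (A-D) (by omega),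
      show A-D-1 = A-1-D by ring]
    exact Nat.add_comm _ _
  · rw [intChoose_of_neg_left (show M-D < 0 by omega),
      intChoose_of_neg_left (show M-D < 0 by omega)]
    simp only [mul_zero, add_zero]
    rcases le_or_gt D (A-1) with h2 | h2
    · rw [intChoose_of_lt (show M+1-D < A-D by omega), mul_zero]
    · rw [intChoose_of_lt (show A-1 < D by omega), zero_mul]

lemma alg_GS (A C D M : ℤ) (hM : 0 ≤ M) :
    intChoose (M-D) (A-1-D) * intChoose (A-1-D) (C-D)
      + intChoose (M-D) (A-D) * intChoose (A-D) (C-D)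
      = intChoose (M+1-C) (A-C) * intChoose (M-D) (C-D) := by
  rw [intChoose_trinomial (M-D) (A-1-D) (C-D), intChoose_trinomial (M-D) (A-D) (C-D),
    show M-D-(C-D) = M-C by ring, show A-1-D-(C-D) = A-1-C by ring,
    show A-D-(C-D) = A-C by ring, ← mul_add]
  rcases le_or_gt C M with h | h
  · rw [mul_comm]
    congr 1
    rw [show M+1-C = (M-C)+1 by ring, intChoose_pascal (M-C) (A-C) (by omega),
      show A-C-1 = A-1-C by ring]
  · rw [intChoose_of_lt (show M-D < C-D by omega), zero_mul, mul_zero]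

lemma card_between {X Y : Finset ℕ} (h : Y ⊆ X) (m : ℕ) :
    ((X.powerset.filter (fun Z => Y ⊆ Z ∧ Z.card = m))).card
      = intChoose ((X.card : ℤ) - Y.card) ((m : ℤ) - Y.card) := by
  rcases le_or_gt Y.card m with hm | hm
  · have key : (X.powerset.filter (fun Z => Y ⊆ Z ∧ Z.card = m)).card
        = ((X \ Y).powersetCard (m - Y.card)).card := by
      apply card_nbij'_old (fun Z => Z \ Y) (fun S => S ∪ Y)
      · intro Z hZ
        simp only [mem_filter, mem_powerset] at hZ
        simp only [mem_powersetCard]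
        exact ⟨sdiff_subset_sdiff hZ.1 le_rfl, by rw [card_sdiff_of_subset hZ.2.1, hZ.2.2]⟩
      · intro S hS
        simp only [mem_powersetCard] at hS
        have hdisj : Disjoint S Y := (subset_sdiff.mp hS.1).2
        simp only [mem_filter, mem_powerset]
        refine ⟨union_subset ((subset_sdiff.mp hS.1).1) h, subset_union_right, ?_⟩
        rw [card_union_of_disjoint hdisj, hS.2]
        omega
      · intro Z hZ
        simp only [mem_filter, mem_powerset] at hZ
        exact sdiff_union_of_subset hZ.2.1
      · intro S hS
        simp only [mem_powersetCard] at hS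
        have hdisj : Disjoint S Y := (subset_sdiff.mp hS.1).2
        rw [union_sdiff_distrib, Finset.sdiff_self, Finset.union_empty, sdiff_eq_self_of_disjoint hdisj]
    rw [key, card_powersetCard, card_sdiff_of_subset h]
    rw [show ((X.card : ℤ) - Y.card) = ((X.card - Y.card : ℕ) : ℤ) by
        have := card_le_card h; omega,
      show ((m : ℤ) - Y.card) = ((m - Y.card : ℕ) : ℤ) by omega, intChoose_natCast]
  · rw [intChoose_of_neg_right (by omega), Finset.card_eq_zero, filter_eq_empty_iff]
    intro Z hZ
    rintro ⟨h1, h2⟩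
    have := card_le_card h1
    omega

noncomputable def funFinset (s : Finset ℕ) (Ω : Finset (Finset ℕ)) : Finset (ℕ → Finset ℕ) :=
  (s.pi fun _ => Ω).image fun f i => if h : i ∈ s then f i h else ∅

lemma mem_funFinset {s : Finset ℕ} {Ω : Finset (Finset ℕ)} {T : ℕ → Finset ℕ} :
    T ∈ funFinset s Ω ↔ (∀ i ∈ s, T i ∈ Ω) ∧ ∀ i, i ∉ s → T i = ∅ := by
  constructor
  · intro hT
    simp only [funFinset, Finset.mem_image] at hT
    obtain ⟨f, hf, rfl⟩ := hT
    simp only [Finset.mem_pi] at hf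
    constructor
    · intro i hi; simp only [dif_pos hi]; exact hf i hi
    · intro i hi; simp only [dif_neg hi]
  · rintro ⟨h1, h2⟩
    simp only [funFinset, Finset.mem_image]
    refine ⟨fun i _ => T i, by simp only [Finset.mem_pi]; exact h1, ?_⟩
    funext i
    by_cases hi : i ∈ s
    · simp [dif_pos hi]
    · simp [dif_neg hi, h2 i hi]

noncomputable def chainFS (e : ℕ → ℕ) (r s : ℕ) (X Y : Finset ℕ) : Finset (ℕ → Finset ℕ) :=
  (funFinset (Icc r s) X.powerset).filter
    (fun T => T r = X ∧ T s = Y ∧ (∀ k ∈ Ico r s, T (k+1) ⊆ T k) ∧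
      (∀ k ∈ Icc r s, (T k).card = e k))

lemma mem_chainFS {e : ℕ → ℕ} {r s : ℕ} {X Y : Finset ℕ} {T : ℕ → Finset ℕ} :
    T ∈ chainFS e r s X Y ↔
      (∀ i ∈ Icc r s, T i ⊆ X) ∧ (∀ i, i ∉ Icc r s → T i = ∅) ∧ T r = X ∧ T s = Y ∧
      (∀ k ∈ Ico r s, T (k+1) ⊆ T k) ∧ (∀ k ∈ Icc r s, (T k).card = e k) := by
  simp only [chainFS, mem_filter, mem_funFinset, mem_powerset]
  tauto

lemma chain_mono {T : ℕ → Finset ℕ} {r s : ℕ} (h : ∀ k ∈ Ico r s, T (k+1) ⊆ T k)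
    {i j : ℕ} (hri : r ≤ i) (hij : i ≤ j) (hjs : j ≤ s) : T j ⊆ T i := by
  induction j, hij using Nat.le_induction with
  | base => exact Finset.Subset.refl _
  | succ j hij ih =>
      exact (h j (by simp only [mem_Ico]; omega)).trans (ih (by omega))

lemma card_chainFS (e : ℕ → ℕ) : ∀ (d r : ℕ), 1 ≤ r → ∀ (X Y : Finset ℕ), Y ⊆ X →
    X.card = e r → Y.card = e (r + d) →
    (chainFS e r (r + d) X Y).card
      = ∏ k ∈ Icc r (r + d - 2), intChoose ((e k : ℤ) - e (r + d)) ((e (k+1) : ℤ) - e (r + d)) := by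
  intro d
  induction d with
  | zero =>
      intro r hr X Y hYX hX hY
      simp only [Nat.add_zero] at hY
      have hXY : Y = X := Finset.eq_of_subset_of_card_le hYX (by omega)
      subst hXY
      have : Icc r (r + 0 - 2) = ∅ := by
        apply Finset.Icc_eq_empty; omega
      rw [this, Finset.prod_empty, Finset.card_eq_one]
      refine ⟨fun i => if i = r then Y else ∅, ?_⟩
      ext T
      simp only [Finset.mem_singleton, mem_chainFS]
      constructor
      · rintro ⟨h1, h2, h3, h4, h5, h6⟩
        funext i
        by_cases hi : i = r
        · simp [hi, h3]
        · simp only [if_neg hi]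
          exact h2 i (by simp only [mem_Icc]; omega)
      · rintro rfl
        simp only [Nat.add_zero, if_pos rfl]
        refine ⟨?_, ?_, rfl, rfl, ?_, ?_⟩
        · intro i hi
          simp only [mem_Icc] at hi
          have : i = r := by omega
          simp [this]
        · intro i hi
          simp only [mem_Icc] at hi
          rw [if_neg (by omega)]
        · intro k hk; simp only [mem_Ico] at hk; omega
        · intro k hk
          simp only [mem_Icc] at hk
          have : k = r := by omega
          simp [this, hX]
  | succ d ih =>
      intro r hr X Y hYX hX hY
      set s := r + (d + 1) with hs
      set Zset := X.powerset.filter (fun Z => Y ⊆ Z ∧ Z.card = e (r+1)) with hZset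
      clear_value s Zset
      have hmap : ∀ T ∈ chainFS e r s X Y, T (r+1) ∈ Zset := by
        intro T hT
        rw [mem_chainFS] at hT
        obtain ⟨h1, h2, h3, h4, h5, h6⟩ := hT
        simp only [hZset, mem_filter, mem_powerset]
        refine ⟨h1 _ (by simp only [mem_Icc]; omega), ?_, h6 _ (by simp only [mem_Icc]; omega)⟩
        rw [← h4]
        exact chain_mono h5 (by omega) (by omega) (by omega)
      rw [Finset.card_eq_sum_card_fiberwise hmap]
      have hfib : ∀ Z ∈ Zset, ((chainFS e r s X Y).filter (fun T => T (r+1) = Z)).card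
          = ∏ k ∈ Icc (r+1) (s - 2), intChoose ((e k : ℤ) - e s) ((e (k+1) : ℤ) - e s) := by
        intro Z hZ
        simp only [hZset, mem_filter, mem_powerset] at hZ
        obtain ⟨hZX, hYZ, hZcard⟩ := hZ
        have hbij : ((chainFS e r s X Y).filter (fun T => T (r+1) = Z)).card
            = (chainFS e (r+1) s Z Y).card := by
          apply card_nbij'_old (fun T => Function.update T r ∅)
            (fun V => Function.update V r X)
          · intro T hT
            simp only [mem_filter] at hT
            obtain ⟨hT, hTZ⟩ := hT
            rw [mem_chainFS] at hT ⊢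
            obtain ⟨h1, h2, h3, h4, h5, h6⟩ := hT
            refine ⟨?_, ?_, ?_, ?_, ?_, ?_⟩
            · intro i hi
              simp only [mem_Icc] at hi
              rw [Function.update_of_ne (by omega)]
              rw [← hTZ]
              exact chain_mono h5 (by omega) (by omega) (by omega)
            · intro i hi
              simp only [mem_Icc] at hi
              by_cases hir : i = r
              · subst hir; simp
              · rw [Function.update_of_ne hir]
                exact h2 i (by simp only [mem_Icc]; omega)
            · rw [Function.update_of_ne (by omega)]; exact hTZ
            · rw [Function.update_of_ne (by omega)]; exact h4
            · intro k hk
              simp only [mem_Ico] at hk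
              rw [Function.update_of_ne (by omega), Function.update_of_ne (by omega)]
              exact h5 k (by simp only [mem_Ico]; omega)
            · intro k hk
              simp only [mem_Icc] at hk
              rw [Function.update_of_ne (by omega)]
              exact h6 k (by simp only [mem_Icc]; omega)
          · intro V hV
            rw [mem_chainFS] at hV
            obtain ⟨h1, h2, h3, h4, h5, h6⟩ := hV
            simp only [mem_filter]
            constructor
            · rw [mem_chainFS]
              refine ⟨?_, ?_, ?_, ?_, ?_, ?_⟩
              · intro i hi
                simp only [mem_Icc] at hi
                by_cases hir : i = r
                · subst hir; simp
                · rw [Function.update_of_ne hir]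
                  exact (h1 i (by simp only [mem_Icc]; omega)).trans hZX
              · intro i hi
                simp only [mem_Icc] at hi
                rw [Function.update_of_ne (by omega)]
                exact h2 i (by simp only [mem_Icc]; omega)
              · simp
              · rw [Function.update_of_ne (by omega)]; exact h4
              · intro k hk
                simp only [mem_Ico] at hk
                by_cases hkr : k = r
                · subst hkr
                  rw [Function.update_of_ne (by omega), Function.update_self, h3]
                  exact hZX
                · rw [Function.update_of_ne (by omega), Function.update_of_ne hkr]
                  exact h5 k (by simp only [mem_Ico]; omega)
              · intro k hk
                simp only [mem_Icc] at hk
                by_cases hkr : k = r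
                · subst hkr; rw [Function.update_self, hX]
                · rw [Function.update_of_ne hkr]
                  exact h6 k (by simp only [mem_Icc]; omega)
            · rw [Function.update_of_ne (by omega)]; exact h3
          · intro T hT
            simp only [mem_filter, mem_chainFS] at hT
            funext i
            by_cases hir : i = r
            · subst hir
              simp only [Function.update_self]
              exact hT.1.2.2.1.symm
            · simp only [Function.update_of_ne hir]
          · intro V hV
            rw [mem_chainFS] at hV
            funext i
            by_cases hir : i = r
            · rw [hir]
              simp only [Function.update_self]
              exact (hV.2.1 r (by simp only [mem_Icc]; omega)).symm
            · simp only [Function.update_of_ne hir]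
        rw [hbij]
        have heq : r + 1 + d = s := by rw [hs, Nat.add_comm d 1]; exact Nat.add_assoc r 1 d
        have := ih (r+1) (Nat.succ_le_succ (Nat.zero_le r)) Z Y hYZ hZcard (by rw [hY, ← heq])
        rw [heq] at this
        rw [this]
      rw [Finset.sum_congr rfl hfib, Finset.sum_const, smul_eq_mul]
      have hZcard : Zset.card = intChoose ((e r : ℤ) - e s) ((e (r+1) : ℤ) - e s) := by
        rw [hZset, card_between hYX, hX, hY]
      rw [hZcard]
      rcases Nat.eq_or_lt_of_le (show 1 ≤ d + 1 by omega) with hd | hd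
      · -- d = 0, s = r + 1
        have hd0 : d = 0 := by omega
        subst hd0
        subst hs
        simp only [Nat.zero_add] at *
        have h1 : Icc r (r + 1 - 2) = ∅ := Finset.Icc_eq_empty (by omega)
        have h2 : Icc (r+1) (r + 1 - 2) = ∅ := Finset.Icc_eq_empty (by omega)
        rw [h1, h2, Finset.prod_empty, mul_one, sub_self, intChoose_zero_right]
        have := Finset.card_le_card hYX
        omega
      · -- d ≥ 1, r ≤ s - 2
        have hsplit : Icc r (s - 2) = insert r (Icc (r+1) (s-2)) := by
          ext x
          simp only [mem_Icc, mem_insert]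
          omega
        rw [hsplit, Finset.prod_insert (by simp only [mem_Icc]; omega)]

def SP (M a d : ℕ) : Finset (Finset ℕ × Finset ℕ) :=
  ((Icc 1 M).powersetCard a ×ˢ (Icc 1 M).powersetCard d).filter
    (fun q => q.2 ⊆ q.1 ∧ ∀ m ∈ q.2, m + 1 ∈ q.1)

def RS (M a d : ℕ) : Finset (Finset ℕ × Finset ℕ) := (SP M a d).filter (fun q => M ∈ q.1)

lemma mem_SP {M a d : ℕ} {q : Finset ℕ × Finset ℕ} :
    q ∈ SP M a d ↔ q.1 ⊆ Icc 1 M ∧ q.2 ⊆ Icc 1 M ∧ q.1.card = a ∧ q.2.card = d ∧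
      q.2 ⊆ q.1 ∧ ∀ m ∈ q.2, m + 1 ∈ q.1 := by
  simp only [SP, mem_filter, Finset.mem_product, mem_powersetCard]
  tauto

lemma mem_RS {M a d : ℕ} {q : Finset ℕ × Finset ℕ} :
    q ∈ RS M a d ↔ q ∈ SP M a d ∧ M ∈ q.1 := by
  simp [RS, mem_filter]

lemma SP_zero_card (M d : ℕ) : (SP M 0 d).card = if d = 0 then 1 else 0 := by
  split_ifs with hd
  · subst hd
    rw [Finset.card_eq_one]
    refine ⟨(∅, ∅), ?_⟩
    ext q
    simp only [Finset.mem_singleton, mem_SP]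
    constructor
    · rintro ⟨h1, h2, h3, h4, h5, h6⟩
      have hq1 : q.1 = ∅ := Finset.card_eq_zero.mp h3
      have hq2 : q.2 = ∅ := Finset.card_eq_zero.mp h4
      rw [Prod.ext_iff]; exact ⟨hq1, hq2⟩
    · rintro rfl
      simp
  · rw [Finset.card_eq_zero, Finset.eq_empty_iff_forall_notMem]
    intro q hq
    rw [mem_SP] at hq
    obtain ⟨h1, h2, h3, h4, h5, h6⟩ := hq
    have hq1 : q.1 = ∅ := Finset.card_eq_zero.mp h3
    rw [hq1, Finset.subset_empty] at h5
    rw [h5] at h4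
    simp at h4
    exact hd h4.symm

lemma RS_zeroa_card (M d : ℕ) : (RS M 0 d).card = 0 := by
  rw [Finset.card_eq_zero, Finset.eq_empty_iff_forall_notMem]
  intro q hq
  rw [mem_RS, mem_SP] at hq
  have : q.1 = ∅ := Finset.card_eq_zero.mp hq.1.2.2.1
  rw [this] at hq
  exact absurd hq.2 (Finset.notMem_empty M)

lemma SP_zeroM_card (a d : ℕ) (ha : 1 ≤ a) : (SP 0 a d).card = 0 := by
  rw [Finset.card_eq_zero, Finset.eq_empty_iff_forall_notMem]
  intro q hq
  rw [mem_SP] at hq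
  obtain ⟨h1, _, h3, _⟩ := hq
  rw [show Icc 1 0 = ∅ from rfl, Finset.subset_empty] at h1
  rw [h1] at h3
  simp at h3
  omega

lemma SP_filter_nomem (M a d : ℕ) :
    (SP (M+1) a d).filter (fun q => ¬ M+1 ∈ q.1) = SP M a d := by
  ext q
  simp only [mem_filter, mem_SP]
  constructor
  · rintro ⟨⟨h1, h2, h3, h4, h5, h6⟩, h7⟩
    refine ⟨?_, ?_, h3, h4, h5, h6⟩
    · intro x hx
      have hx1 := h1 hx
      simp only [mem_Icc] at hx1 ⊢
      have : x ≠ M+1 := by rintro rfl; exact h7 hx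
      omega
    · intro x hx
      have hx1 := h1 (h5 hx)
      have hx2 := h6 x hx
      have hx3 := h1 hx2
      simp only [mem_Icc] at hx1 hx3 ⊢
      have : x + 1 ≠ M+1 := by rintro h; rw [h] at hx2; exact h7 hx2
      omega
  · rintro ⟨h1, h2, h3, h4, h5, h6⟩
    have hsub : Icc 1 M ⊆ Icc 1 (M+1) := Finset.Icc_subset_Icc le_rfl (by omega)
    refine ⟨⟨h1.trans hsub, h2.trans hsub, h3, h4, h5, h6⟩, fun hc => ?_⟩
    have := h1 hc
    simp only [mem_Icc] at this
    omega

lemma SP_split (M a d : ℕ) :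
    (SP (M+1) a d).card = (SP M a d).card + (RS (M+1) a d).card := by
  have h := Finset.card_filter_add_card_filter_not
    (s := SP (M+1) a d) (p := fun q => M+1 ∈ q.1)
  rw [← h, SP_filter_nomem M a d, ← RS]
  omega

lemma RS_split_nomem (M a d : ℕ) (ha : 1 ≤ a) :
    ((RS (M+1) a d).filter (fun q => M ∉ q.2)).card = (SP M (a-1) d).card := by
  apply card_nbij'_old (fun q => (q.1.erase (M+1), q.2)) (fun q => (insert (M+1) q.1, q.2))
  · intro q hq
    simp only [mem_filter, mem_RS, mem_SP] at hq
    obtain ⟨⟨⟨h1, h2, h3, h4, h5, h6⟩, h7⟩, h8⟩ := hq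
    rw [mem_SP]
    have hD : q.2 ⊆ Icc 1 M := by
      intro x hx
      have hx1 := h2 hx
      have hx3 := h1 (h6 x hx)
      simp only [mem_Icc] at hx1 hx3 ⊢
      omega
    refine ⟨?_, hD, ?_, h4, ?_, ?_⟩
    · intro x hx
      simp only [Finset.mem_erase] at hx
      have := h1 hx.2
      simp only [mem_Icc] at this ⊢
      have := hx.1
      omega
    · rw [Finset.card_erase_of_mem h7, h3]
    · intro x hx
      simp only [Finset.mem_erase]
      have := hD hx
      simp only [mem_Icc] at this
      exact ⟨by omega, h5 hx⟩
    · intro x hx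
      simp only [Finset.mem_erase]
      have hxM : x ≠ M := by rintro rfl; exact h8 hx
      exact ⟨by omega, h6 x hx⟩
  · intro q hq
    rw [mem_SP] at hq
    obtain ⟨h1, h2, h3, h4, h5, h6⟩ := hq
    have hM1 : M + 1 ∉ q.1 := by
      intro hc; have := h1 hc; simp only [mem_Icc] at this; omega
    have hMD : M ∉ q.2 := by
      intro hc; have := h1 (h6 M hc); simp only [mem_Icc] at this; omega
    simp only [mem_filter, mem_RS, mem_SP]
    have hsub : Icc 1 M ⊆ Icc 1 (M+1) := Finset.Icc_subset_Icc le_rfl (by omega)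
    refine ⟨⟨⟨?_, h2.trans hsub, ?_, h4, ?_, ?_⟩, ?_⟩, hMD⟩
    · intro x hx
      simp only [Finset.mem_insert] at hx
      rcases hx with rfl | hx
      · simp only [mem_Icc]; omega
      · exact hsub (h1 hx)
    · rw [Finset.card_insert_of_notMem hM1, h3]; omega
    · exact h5.trans (Finset.subset_insert _ _)
    · intro m hm
      exact Finset.mem_insert_of_mem (h6 m hm)
    · exact Finset.mem_insert_self _ _
  · intro q hq
    simp only [mem_filter, mem_RS] at hq
    rw [Prod.ext_iff]
    exact ⟨Finset.insert_erase hq.1.2, rfl⟩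
  · intro q hq
    rw [mem_SP] at hq
    have hM1 : M + 1 ∉ q.1 := by
      intro hc; have := hq.1 hc; simp only [mem_Icc] at this; omega
    rw [Prod.ext_iff]
    exact ⟨Finset.erase_insert hM1, rfl⟩

lemma RS_split_mem (M a d : ℕ) (ha : 1 ≤ a) (hd : 1 ≤ d) :
    ((RS (M+1) a d).filter (fun q => M ∈ q.2)).card = (RS M (a-1) (d-1)).card := by
  apply card_nbij'_old (fun q => (q.1.erase (M+1), q.2.erase M))
    (fun q => (insert (M+1) q.1, insert M q.2))
  · intro q hq
    simp only [mem_filter, mem_RS, mem_SP] at hq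
    obtain ⟨⟨⟨h1, h2, h3, h4, h5, h6⟩, h7⟩, h8⟩ := hq
    have hD : q.2 ⊆ Icc 1 M := by
      intro x hx
      have hx1 := h2 hx
      have hx3 := h1 (h6 x hx)
      simp only [mem_Icc] at hx1 hx3 ⊢
      omega
    rw [mem_RS, mem_SP]
    refine ⟨⟨?_, ?_, ?_, ?_, ?_, ?_⟩, ?_⟩
    · intro x hx
      simp only [Finset.mem_erase] at hx
      have := h1 hx.2
      simp only [mem_Icc] at this ⊢
      have := hx.1
      omega
    · exact (Finset.erase_subset _ _).trans hD
    · rw [Finset.card_erase_of_mem h7, h3]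
    · rw [Finset.card_erase_of_mem h8, h4]
    · intro x hx
      simp only [Finset.mem_erase] at hx ⊢
      have := hD hx.2
      simp only [mem_Icc] at this
      exact ⟨by omega, h5 hx.2⟩
    · intro x hx
      simp only [Finset.mem_erase] at hx ⊢
      exact ⟨by omega, h6 x hx.2⟩
    · simp only [Finset.mem_erase]
      exact ⟨by omega, h5 h8⟩
  · intro q hq
    rw [mem_RS, mem_SP] at hq
    obtain ⟨⟨h1, h2, h3, h4, h5, h6⟩, h7⟩ := hq
    have hM1 : M + 1 ∉ q.1 := by
      intro hc; have := h1 hc; simp only [mem_Icc] at this; omega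
    have hMD : M ∉ q.2 := by
      intro hc; have := h1 (h6 M hc); simp only [mem_Icc] at this; omega
    have hM : 1 ≤ M := by
      have := h1 h7; simp only [mem_Icc] at this; omega
    simp only [mem_filter, mem_RS, mem_SP]
    have hsub : Icc 1 M ⊆ Icc 1 (M+1) := Finset.Icc_subset_Icc le_rfl (by omega)
    refine ⟨⟨⟨?_, ?_, ?_, ?_, ?_, ?_⟩, ?_⟩, ?_⟩
    · intro x hx
      simp only [Finset.mem_insert] at hx
      rcases hx with rfl | hx
      · simp only [mem_Icc]; omega
      · exact hsub (h1 hx)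
    · intro x hx
      simp only [Finset.mem_insert] at hx
      rcases hx with rfl | hx
      · simp only [mem_Icc]; omega
      · exact hsub (h2 hx)
    · rw [Finset.card_insert_of_notMem hM1, h3]; omega
    · rw [Finset.card_insert_of_notMem hMD, h4]; omega
    · intro x hx
      simp only [Finset.mem_insert] at hx ⊢
      rcases hx with rfl | hx
      · right; exact h7
      · right; exact h5 hx
    · intro x hx
      simp only [Finset.mem_insert] at hx ⊢
      rcases hx with rfl | hx
      · left; rfl
      · right; exact h6 x hx
    · exact Finset.mem_insert_self _ _
    · exact Finset.mem_insert_self _ _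
  · intro q hq
    simp only [mem_filter, mem_RS, mem_SP] at hq
    rw [Prod.ext_iff]
    exact ⟨Finset.insert_erase hq.1.2, Finset.insert_erase hq.2⟩
  · intro q hq
    rw [mem_RS, mem_SP] at hq
    obtain ⟨⟨h1, h2, h3, h4, h5, h6⟩, h7⟩ := hq
    have hM1 : M + 1 ∉ q.1 := by
      intro hc; have := h1 hc; simp only [mem_Icc] at this; omega
    have hMD : M ∉ q.2 := by
      intro hc; have := h1 (h6 M hc); simp only [mem_Icc] at this; omega
    rw [Prod.ext_iff]
    exact ⟨Finset.erase_insert hM1, Finset.erase_insert hMD⟩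

lemma RS_zeroM_card (a d : ℕ) : (RS 0 a d).card = 0 := by
  rw [Finset.card_eq_zero, Finset.eq_empty_iff_forall_notMem]
  intro q hq
  rw [mem_RS, mem_SP] at hq
  have := hq.1.1 hq.2
  simp only [mem_Icc] at this
  omega

theorem SP_RS_card : ∀ M a d : ℕ, 1 ≤ a →
    (SP M a d).card = intChoose ((a:ℤ) - 1) d * intChoose ((M:ℤ) - d) ((a:ℤ) - d) ∧
    (RS M a d).card = intChoose ((a:ℤ) - 1) d * intChoose ((M:ℤ) - 1 - d) ((a:ℤ) - 1 - d) := by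
  intro M
  induction M with
  | zero =>
      intro a d ha
      constructor
      · have h2 : intChoose (((0:ℕ):ℤ) - d) ((a:ℤ) - d) = 0 := by
          rcases Nat.eq_zero_or_pos d with rfl | hd
          · apply intChoose_of_lt; push_cast; omega
          · apply intChoose_of_neg_left; push_cast; omega
        rw [SP_zeroM_card a d ha, h2, mul_zero]
      · have h2 : intChoose (((0:ℕ):ℤ) - 1 - d) ((a:ℤ) - 1 - d) = 0 := by
          apply intChoose_of_neg_left; push_cast; omega
        rw [RS_zeroM_card, h2, mul_zero]
  | succ M ihM =>
      intro a d ha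
      have hsplit := Finset.card_filter_add_card_filter_not
        (s := RS (M+1) a d) (p := fun q => M ∈ q.2)
      have hRS : (RS (M+1) a d).card
          = intChoose ((a:ℤ) - 1) d * intChoose ((M:ℤ) - d) ((a:ℤ) - 1 - d) := by
        rcases Nat.eq_or_lt_of_le ha with h1 | h1
        · -- a = 1
          have ha1 : a = 1 := h1.symm
          subst ha1
          rcases Nat.eq_zero_or_pos d with rfl | hd
          · -- a = 1, d = 0
            have hempty : (RS (M+1) 1 0).filter (fun q => M ∈ q.2) = ∅ := by
              rw [Finset.eq_empty_iff_forall_notMem]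
              intro q hq
              simp only [mem_filter, mem_RS, mem_SP] at hq
              have h4 := hq.1.1.2.2.2.1
              have := Finset.card_pos.mpr ⟨M, hq.2⟩
              omega
            have h2 := RS_split_nomem M 1 0 le_rfl
            have h3 : (SP M 0 0).card = 1 := by rw [SP_zero_card]; simp
            have hval : (RS (M+1) 1 0).card = 1 := by
              rw [hempty] at hsplit
              simp only [Finset.card_empty] at hsplit
              rw [show (1:ℕ) - 1 = 0 from rfl] at h2
              omega
            rw [hval]
            rw [show ((1:ℕ):ℤ) - 1 = 0 by norm_num, show ((0:ℕ):ℤ) = 0 by norm_num]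
            rw [intChoose_zero_right le_rfl, show (0:ℤ) - 0 = 0 by ring,
              show (M:ℤ) - 0 = (M:ℤ) by ring, intChoose_zero_right (by positivity)]
          · -- a = 1, d ≥ 1
            have hempty : RS (M+1) 1 d = ∅ := by
              rw [Finset.eq_empty_iff_forall_notMem]
              intro q hq
              rw [mem_RS, mem_SP] at hq
              obtain ⟨⟨g1, g2, g3, g4, g5, g6⟩, g7⟩ := hq
              obtain ⟨m, hm⟩ := Finset.card_pos.mp (show 0 < q.2.card by omega)
              have e1 : m = M + 1 := Finset.card_le_one.mp (le_of_eq g3) m (g5 hm) (M+1) g7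
              have e2 : m + 1 = M + 1 :=
                Finset.card_le_one.mp (le_of_eq g3) (m+1) (g6 m hm) (M+1) g7
              omega
            rw [hempty]
            simp only [Finset.card_empty]
            rw [show ((1:ℕ):ℤ) - 1 = 0 by norm_num, intChoose_of_lt (show (0:ℤ) < d by push_cast; omega),
              zero_mul]
        · -- a ≥ 2
          have ha2 : 2 ≤ a := h1
          have c1 : ((a - 1 : ℕ) : ℤ) = (a:ℤ) - 1 := by omega
          rcases Nat.eq_zero_or_pos d with rfl | hd
          · -- d = 0
            have hempty : (RS (M+1) a 0).filter (fun q => M ∈ q.2) = ∅ := by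
              rw [Finset.eq_empty_iff_forall_notMem]
              intro q hq
              simp only [mem_filter, mem_RS, mem_SP] at hq
              have h4 := hq.1.1.2.2.2.1
              have := Finset.card_pos.mpr ⟨M, hq.2⟩
              omega
            have h2 := RS_split_nomem M a 0 (by omega)
            obtain ⟨hSP', _⟩ := ihM (a-1) 0 (by omega)
            rw [c1] at hSP'
            have hval : (RS (M+1) a 0).card = (SP M (a-1) 0).card := by
              rw [hempty] at hsplit
              simp only [Finset.card_empty] at hsplit
              omega
            rw [hval, hSP']
            rw [show ((0:ℕ):ℤ) = 0 by norm_num]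
            rw [show (a:ℤ) - 1 - 0 = (a:ℤ) - 1 by ring, show (M:ℤ) - 0 = (M:ℤ) by ring,
              show (a:ℤ) - 1 - 1 = (a:ℤ) - 2 by ring]
            rw [intChoose_zero_right (by push_cast; omega),
              intChoose_zero_right (by push_cast; omega)]
          · -- d ≥ 1
            have c2 : ((d - 1 : ℕ) : ℤ) = (d:ℤ) - 1 := by omega
            obtain ⟨hSP', _⟩ := ihM (a-1) d (by omega)
            obtain ⟨_, hRS'⟩ := ihM (a-1) (d-1) (by omega)
            rw [c1] at hSP'
            rw [c1, c2] at hRS'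
            have hval : (RS (M+1) a d).card = (RS M (a-1) (d-1)).card + (SP M (a-1) d).card := by
              rw [RS_split_mem M a d (by omega) hd, RS_split_nomem M a d (by omega)] at hsplit
              omega
            rw [hval, hSP', hRS']
            rw [show (M:ℤ) - 1 - ((d:ℤ) - 1) = (M:ℤ) - d by ring,
              show (a:ℤ) - 1 - 1 - ((d:ℤ) - 1) = (a:ℤ) - 1 - d by ring,
              show (a:ℤ) - 1 - 1 = (a:ℤ) - 2 by ring,
              show (a:ℤ) - 1 - (d:ℤ) = (a:ℤ) - 1 - d by ring]
            exact alg_RS (a:ℤ) (d:ℤ) (M:ℤ) (by push_cast; omega)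
      constructor
      · obtain ⟨hSP', _⟩ := ihM a d ha
        calc (SP (M+1) a d).card
            = (SP M a d).card + (RS (M+1) a d).card := SP_split M a d
          _ = intChoose ((a:ℤ)-1) d * intChoose ((M:ℤ)-d) ((a:ℤ)-d)
              + intChoose ((a:ℤ)-1) d * intChoose ((M:ℤ)-d) ((a:ℤ)-1-d) := by rw [hSP', hRS]
          _ = intChoose ((a:ℤ)-1) d * intChoose ((M:ℤ)+1-d) ((a:ℤ)-d) :=
              alg_SP (a:ℤ) (d:ℤ) (M:ℤ) (by positivity)
          _ = intChoose ((a:ℤ)-1) d * intChoose (((M+1:ℕ):ℤ)-d) ((a:ℤ)-d) := by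
              norm_num
      · rw [hRS]
        have : ((M+1:ℕ):ℤ) - 1 - d = (M:ℤ) - d := by push_cast; ring
        rw [this]

def GS (M a c d : ℕ) : Finset (Finset ℕ × Finset ℕ × Finset ℕ) :=
  ((Icc 1 M).powersetCard a ×ˢ (Icc 1 (M-1)).powersetCard c ×ˢ (Icc 1 (M-1)).powersetCard d).filter
    (fun q => q.2.1 ⊆ q.1 ∧ q.2.2 ⊆ q.2.1 ∧ ∀ m ∈ q.2.2, m + 1 ∈ q.1)

lemma mem_GS {M a c d : ℕ} {q : Finset ℕ × Finset ℕ × Finset ℕ} :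
    q ∈ GS M a c d ↔ q.1 ⊆ Icc 1 M ∧ q.2.1 ⊆ Icc 1 (M-1) ∧ q.2.2 ⊆ Icc 1 (M-1) ∧
      q.1.card = a ∧ q.2.1.card = c ∧ q.2.2.card = d ∧
      q.2.1 ⊆ q.1 ∧ q.2.2 ⊆ q.2.1 ∧ ∀ m ∈ q.2.2, m + 1 ∈ q.1 := by
  simp only [GS, mem_filter, Finset.mem_product, mem_powersetCard]
  tauto

lemma GS_card (M a c d : ℕ) (ha : 1 ≤ a) :
    (GS (M+1) a c d).card = intChoose ((a:ℤ)-1) d * (intChoose ((M:ℤ)+1-c) ((a:ℤ)-c)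
      * intChoose ((M:ℤ)-d) ((c:ℤ)-d)) := by
  have hmap : ∀ x ∈ GS (M+1) a c d, (x.1, x.2.2) ∈ SP (M+1) a d := by
    intro x hx
    rw [mem_GS] at hx
    obtain ⟨h1, h2, h3, h4, h5, h6, h7, h8, h9⟩ := hx
    rw [mem_SP]
    have hsub : Icc 1 (M+1-1) ⊆ Icc 1 (M+1) := Finset.Icc_subset_Icc le_rfl (by omega)
    exact ⟨h1, h3.trans hsub, h4, h6, h8.trans h7, h9⟩
  rw [Finset.card_eq_sum_card_fiberwise hmap]
  have hfib : ∀ q ∈ SP (M+1) a d,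
      ((GS (M+1) a c d).filter (fun x => (x.1, x.2.2) = q)).card
        = if M+1 ∈ q.1 then intChoose ((a:ℤ)-1-d) ((c:ℤ)-d)
          else intChoose ((a:ℤ)-d) ((c:ℤ)-d) := by
    intro q hq
    rw [mem_SP] at hq
    obtain ⟨g1, g2, g3, g4, g5, g6⟩ := hq
    have hDM : q.2 ⊆ Icc 1 M := by
      intro m hm
      have hm1 := g2 hm
      have hm2 := g1 (g6 m hm)
      simp only [mem_Icc] at hm1 hm2 ⊢
      omega
    set X := q.1 ∩ Icc 1 M with hX
    have hYX : q.2 ⊆ X := Finset.subset_inter g5 hDM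
    have hbij : ((GS (M+1) a c d).filter (fun x => (x.1, x.2.2) = q)).card
        = (X.powerset.filter (fun Z => q.2 ⊆ Z ∧ Z.card = c)).card := by
      apply card_nbij'_old (fun x => x.2.1) (fun Z => (q.1, Z, q.2))
      · intro x hx
        simp only [mem_filter] at hx
        obtain ⟨hx1, hx2⟩ := hx
        rw [mem_GS] at hx1
        obtain ⟨h1, h2, h3, h4, h5, h6, h7, h8, h9⟩ := hx1
        have e1 : x.1 = q.1 := by rw [← hx2]
        have e2 : x.2.2 = q.2 := by rw [← hx2]
        simp only [mem_filter, mem_powerset]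
        rw [Nat.add_sub_cancel] at h2
        refine ⟨Finset.subset_inter (by rw [← e1]; exact h7) h2, by rw [← e2]; exact h8, h5⟩
      · intro Z hZ
        simp only [mem_filter, mem_powerset] at hZ
        obtain ⟨hZ1, hZ2, hZ3⟩ := hZ
        have hZX : Z ⊆ q.1 := hZ1.trans Finset.inter_subset_left
        have hZM : Z ⊆ Icc 1 M := hZ1.trans Finset.inter_subset_right
        simp only [mem_filter]
        constructor
        · rw [mem_GS, Nat.add_sub_cancel]
          exact ⟨g1, hZM, hDM, g3, hZ3, g4, hZX, hZ2, g6⟩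
        · trivial
      · intro x hx
        simp only [mem_filter] at hx
        obtain ⟨_, hx2⟩ := hx
        have e1 : x.1 = q.1 := by rw [← hx2]
        have e2 : x.2.2 = q.2 := by rw [← hx2]
        rw [← e1, ← e2]
      · intro Z hZ
        rfl
    rw [hbij, card_between hYX c, g4]
    have hXcard : X.card = if M+1 ∈ q.1 then a - 1 else a := by
      have hXe : X = q.1.erase (M+1) := by
        ext x
        simp only [hX, Finset.mem_inter, Finset.mem_erase, mem_Icc]
        constructor
        · rintro ⟨hx1, hx2⟩
          exact ⟨by omega, hx1⟩
        · rintro ⟨hx1, hx2⟩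
          have := g1 hx2
          simp only [mem_Icc] at this
          exact ⟨hx2, by omega⟩
      rw [hXe]
      split_ifs with h
      · rw [Finset.card_erase_of_mem h, g3]
      · rw [Finset.erase_eq_of_notMem h, g3]
    rw [hXcard]
    split_ifs with h
    · have e3 : ((a - 1:ℕ):ℤ) - d = (a:ℤ) - 1 - d := by omega
      rw [e3]
    · rfl
  rw [Finset.sum_congr rfl hfib, Finset.sum_ite, Finset.sum_const, Finset.sum_const,
    smul_eq_mul, smul_eq_mul]
  have e1 : (SP (M+1) a d).filter (fun q => M+1 ∈ q.1) = RS (M+1) a d := rfl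
  rw [e1, SP_filter_nomem M a d]
  obtain ⟨hSPM, _⟩ := SP_RS_card M a d ha
  obtain ⟨_, hRSM1⟩ := SP_RS_card (M+1) a d ha
  rw [hSPM, hRSM1]
  have e2 : ((M+1:ℕ):ℤ) - 1 - d = (M:ℤ) - d := by push_cast; ring
  rw [e2, mul_assoc, mul_assoc, ← mul_add]
  congr 1
  exact alg_GS (a:ℤ) (c:ℤ) (d:ℤ) (M:ℤ) (by positivity)

def HS (N a b c d : ℕ) : Finset (Finset ℕ × Finset ℕ × Finset ℕ × Finset ℕ) :=
  ((Icc 1 (N+1)).powersetCard a ×ˢ (Icc 1 (N+1)).powersetCard b ×ˢ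
    (Icc 1 N).powersetCard c ×ˢ (Icc 1 N).powersetCard d).filter
    (fun q => q.2.1 ⊆ q.1 ∧ q.2.2.1 ⊆ q.2.1 ∧ q.2.2.2 ⊆ q.2.2.1 ∧ ∀ m ∈ q.2.2.2, m + 1 ∈ q.1)

lemma mem_HS {N a b c d : ℕ} {q : Finset ℕ × Finset ℕ × Finset ℕ × Finset ℕ} :
    q ∈ HS N a b c d ↔ q.1 ⊆ Icc 1 (N+1) ∧ q.2.1 ⊆ Icc 1 (N+1) ∧ q.2.2.1 ⊆ Icc 1 N ∧
      q.2.2.2 ⊆ Icc 1 N ∧ q.1.card = a ∧ q.2.1.card = b ∧ q.2.2.1.card = c ∧ q.2.2.2.card = d ∧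
      q.2.1 ⊆ q.1 ∧ q.2.2.1 ⊆ q.2.1 ∧ q.2.2.2 ⊆ q.2.2.1 ∧ ∀ m ∈ q.2.2.2, m + 1 ∈ q.1 := by
  simp only [HS, mem_filter, Finset.mem_product, mem_powersetCard]
  tauto

lemma HS_card (N a b c d : ℕ) :
    (HS N a b c d).card = (GS (N+1) a c d).card * intChoose ((a:ℤ)-c) ((b:ℤ)-c) := by
  have hmap : ∀ x ∈ HS N a b c d, (x.1, x.2.2.1, x.2.2.2) ∈ GS (N+1) a c d := by
    intro x hx
    rw [mem_HS] at hx
    obtain ⟨h1, h2, h3, h4, h5, h6, h7, h8, h9, h10, h11, h12⟩ := hx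
    rw [mem_GS, Nat.add_sub_cancel]
    exact ⟨h1, h3, h4, h5, h7, h8, h10.trans h9, h11, h12⟩
  rw [Finset.card_eq_sum_card_fiberwise hmap]
  have hfib : ∀ g ∈ GS (N+1) a c d,
      ((HS N a b c d).filter (fun x => (x.1, x.2.2.1, x.2.2.2) = g)).card
        = intChoose ((a:ℤ)-c) ((b:ℤ)-c) := by
    intro g hg
    rw [mem_GS, Nat.add_sub_cancel] at hg
    obtain ⟨g1, g2, g3, g4, g5, g6, g7, g8, g9⟩ := hg
    have hbij : ((HS N a b c d).filter (fun x => (x.1, x.2.2.1, x.2.2.2) = g)).card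
        = (g.1.powerset.filter (fun B => g.2.1 ⊆ B ∧ B.card = b)).card := by
      apply card_nbij'_old (fun x => x.2.1) (fun B => (g.1, B, g.2.1, g.2.2))
      · intro x hx
        simp only [mem_filter] at hx
        obtain ⟨hx1, hx2⟩ := hx
        rw [mem_HS] at hx1
        obtain ⟨h1, h2, h3, h4, h5, h6, h7, h8, h9, h10, h11, h12⟩ := hx1
        have e1 : x.1 = g.1 := by rw [← hx2]
        have e2 : x.2.2.1 = g.2.1 := by rw [← hx2]
        simp only [mem_filter, mem_powerset]
        exact ⟨by rw [← e1]; exact h9, by rw [← e2]; exact h10, h6⟩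
      · intro B hB
        simp only [mem_filter, mem_powerset] at hB
        obtain ⟨hB1, hB2, hB3⟩ := hB
        simp only [mem_filter]
        refine ⟨?_, trivial⟩
        rw [mem_HS]
        exact ⟨g1, hB1.trans g1, g2, g3, g4, hB3, g5, g6, hB1, hB2, g8, g9⟩
      · intro x hx
        simp only [mem_filter] at hx
        obtain ⟨_, hx2⟩ := hx
        have e1 : x.1 = g.1 := by rw [← hx2]
        have e2 : x.2.2.1 = g.2.1 := by rw [← hx2]
        have e3 : x.2.2.2 = g.2.2 := by rw [← hx2]
        rw [← e1, ← e2, ← e3]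
      · intro B hB
        rfl
    rw [hbij, card_between g7 b, g4, g5]
  rw [Finset.sum_congr rfl hfib, Finset.sum_const, smul_eq_mul]

noncomputable def FS (p t n : ℕ) (e : ℕ → ℕ) : Finset (ℕ → Finset ℕ) :=
  (funFinset (Icc 1 (p+1)) ((Icc 1 (n+1)).powerset)).filter
    (fun T => (∀ i ∈ Icc (t+1) (p+1), T i ⊆ Icc 1 n) ∧
      (∀ i ∈ Icc 1 (p+1), (T i).card = e i) ∧
      (∀ k ∈ Icc 1 p, T (k+1) ⊆ T k) ∧
      (∀ m ∈ T (p+1), m + 1 ∈ T 1))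

lemma mem_FS {p t n : ℕ} {e : ℕ → ℕ} {T : ℕ → Finset ℕ} : T ∈ FS p t n e ↔
    (∀ i ∈ Icc 1 (p+1), T i ⊆ Icc 1 (n+1)) ∧ (∀ i, i ∉ Icc 1 (p+1) → T i = ∅) ∧
    (∀ i ∈ Icc (t+1) (p+1), T i ⊆ Icc 1 n) ∧ (∀ i ∈ Icc 1 (p+1), (T i).card = e i) ∧
    (∀ k ∈ Icc 1 p, T (k+1) ⊆ T k) ∧ (∀ m ∈ T (p+1), m + 1 ∈ T 1) := by
  simp only [FS, mem_filter, mem_funFinset, mem_powerset]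
  tauto

lemma FS_card (p t n : ℕ) (e : ℕ → ℕ) (ht1 : 1 ≤ t) (htp : t ≤ p) :
    (FS p t n e).card
      = (HS n (e 1) (e t) (e (t+1)) (e (p+1))).card * (chiE e 1 t * chiE e (t+1) (p+1)) := by
  have hmap : ∀ T ∈ FS p t n e,
      (T 1, T t, T (t+1), T (p+1)) ∈ HS n (e 1) (e t) (e (t+1)) (e (p+1)) := by
    intro T hT
    rw [mem_FS] at hT
    obtain ⟨f1, f2, f3, f4, f5, f6⟩ := hT
    have hnest : ∀ k ∈ Ico 1 (p+1), T (k+1) ⊆ T k := by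
      intro k hk
      simp only [mem_Ico] at hk
      exact f5 k (by simp only [mem_Icc]; omega)
    rw [mem_HS]
    refine ⟨f1 1 (by simp only [mem_Icc]; omega), f1 t (by simp only [mem_Icc]; omega),
      f3 (t+1) (by simp only [mem_Icc]; omega), f3 (p+1) (by simp only [mem_Icc]; omega),
      f4 1 (by simp only [mem_Icc]; omega), f4 t (by simp only [mem_Icc]; omega),
      f4 (t+1) (by simp only [mem_Icc]; omega), f4 (p+1) (by simp only [mem_Icc]; omega),
      chain_mono hnest (by omega) (by omega) (by omega),
      hnest t (by simp only [mem_Ico]; omega),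
      chain_mono hnest (by omega) (by omega) (by omega), f6⟩
  rw [Finset.card_eq_sum_card_fiberwise hmap]
  have hfib : ∀ q ∈ HS n (e 1) (e t) (e (t+1)) (e (p+1)),
      ((FS p t n e).filter (fun T => (T 1, T t, T (t+1), T (p+1)) = q)).card
        = chiE e 1 t * chiE e (t+1) (p+1) := by
    intro q hq
    rw [mem_HS] at hq
    obtain ⟨q1, q2, q3, q4, q5, q6, q7, q8, q9, q10, q11, q12⟩ := hq
    have heq1 : 1 + (t - 1) = t := by omega
    have heq2 : t + 1 + (p - t) = p + 1 := by omega
    have hbij : ((FS p t n e).filter (fun T => (T 1, T t, T (t+1), T (p+1)) = q)).card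
        = (chainFS e 1 t q.1 q.2.1 ×ˢ chainFS e (t+1) (p+1) q.2.2.1 q.2.2.2).card := by
      apply card_nbij'_old
        (fun T => (fun i => if i ≤ t then T i else ∅, fun i => if t+1 ≤ i then T i else ∅))
        (fun x => fun i => if i ≤ t then x.1 i else x.2 i)
      · -- forward
        intro T hT
        simp only [mem_filter] at hT
        obtain ⟨hT1, hT2⟩ := hT
        rw [mem_FS] at hT1
        obtain ⟨f1, f2, f3, f4, f5, f6⟩ := hT1
        have hnest : ∀ k ∈ Ico 1 (p+1), T (k+1) ⊆ T k := by
          intro k hk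
          simp only [mem_Ico] at hk
          exact f5 k (by simp only [mem_Icc]; omega)
        have e1 : T 1 = q.1 := by rw [← hT2]
        have e2 : T t = q.2.1 := by rw [← hT2]
        have e3 : T (t+1) = q.2.2.1 := by rw [← hT2]
        have e4 : T (p+1) = q.2.2.2 := by rw [← hT2]
        simp only [Finset.mem_product]
        constructor
        · rw [mem_chainFS]
          refine ⟨?_, ?_, ?_, ?_, ?_, ?_⟩
          · intro i hi
            simp only [mem_Icc] at hi
            rw [if_pos hi.2, ← e1]
            exact chain_mono hnest le_rfl hi.1 (by omega)
          · intro i hi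
            simp only [mem_Icc] at hi
            by_cases h : i ≤ t
            · rw [if_pos h]
              exact f2 i (by simp only [mem_Icc]; omega)
            · rw [if_neg h]
          · rw [if_pos ht1]; exact e1
          · rw [if_pos le_rfl]; exact e2
          · intro k hk
            simp only [mem_Ico] at hk
            rw [if_pos (by omega : k + 1 ≤ t), if_pos (by omega : k ≤ t)]
            exact hnest k (by simp only [mem_Ico]; omega)
          · intro k hk
            simp only [mem_Icc] at hk
            rw [if_pos hk.2]
            exact f4 k (by simp only [mem_Icc]; omega)
        · rw [mem_chainFS]
          refine ⟨?_, ?_, ?_, ?_, ?_, ?_⟩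
          · intro i hi
            simp only [mem_Icc] at hi
            rw [if_pos hi.1, ← e3]
            exact chain_mono hnest (by omega) hi.1 hi.2
          · intro i hi
            simp only [mem_Icc] at hi
            by_cases h : t+1 ≤ i
            · rw [if_pos h]
              exact f2 i (by simp only [mem_Icc]; omega)
            · rw [if_neg h]
          · rw [if_pos le_rfl]; exact e3
          · rw [if_pos (by omega : t+1 ≤ p+1)]; exact e4
          · intro k hk
            simp only [mem_Ico] at hk
            rw [if_pos (by omega : t+1 ≤ k+1), if_pos (by omega : t+1 ≤ k)]
            exact hnest k (by simp only [mem_Ico]; omega)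
          · intro k hk
            simp only [mem_Icc] at hk
            rw [if_pos hk.1]
            exact f4 k (by simp only [mem_Icc]; omega)
      · -- backward
        intro x hx
        simp only [Finset.mem_product] at hx
        obtain ⟨hU, hV⟩ := hx
        rw [mem_chainFS] at hU hV
        obtain ⟨u1, u2, u3, u4, u5, u6⟩ := hU
        obtain ⟨v1, v2, v3, v4, v5, v6⟩ := hV
        simp only [mem_filter]
        constructor
        · rw [mem_FS]
          refine ⟨?_, ?_, ?_, ?_, ?_, ?_⟩
          · intro i hi
            simp only [mem_Icc] at hi
            by_cases h : i ≤ t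
            · rw [if_pos h]
              exact (u1 i (by simp only [mem_Icc]; omega)).trans q1
            · rw [if_neg h]
              refine ((v1 i (by simp only [mem_Icc]; omega)).trans q3).trans ?_
              exact Finset.Icc_subset_Icc le_rfl (by omega)
          · intro i hi
            simp only [mem_Icc] at hi
            by_cases h : i ≤ t
            · rw [if_pos h]
              exact u2 i (by simp only [mem_Icc]; omega)
            · rw [if_neg h]
              exact v2 i (by simp only [mem_Icc]; omega)
          · intro i hi
            simp only [mem_Icc] at hi
            rw [if_neg (by omega)]
            exact (v1 i (by simp only [mem_Icc]; omega)).trans q3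
          · intro i hi
            simp only [mem_Icc] at hi
            by_cases h : i ≤ t
            · rw [if_pos h]
              exact u6 i (by simp only [mem_Icc]; omega)
            · rw [if_neg h]
              exact v6 i (by simp only [mem_Icc]; omega)
          · intro k hk
            simp only [mem_Icc] at hk
            rcases lt_trichotomy k t with h | h | h
            · rw [if_pos (by omega : k+1 ≤ t), if_pos (by omega : k ≤ t)]
              exact u5 k (by simp only [mem_Ico]; omega)
            · subst h
              rw [if_neg (by omega), if_pos le_rfl, u4, v3]
              exact q10
            · rw [if_neg (by omega), if_neg (by omega)]
              exact v5 k (by simp only [mem_Ico]; omega)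
          · rw [if_neg (by omega), if_pos ht1, v4, u3]
            exact q12
        · rw [if_pos (show (1:ℕ) ≤ t from ht1), if_pos (le_refl t),
            if_neg (show ¬ t+1 ≤ t by omega), if_neg (show ¬ p+1 ≤ t by omega), u3, u4, v3, v4]
      · -- left inverse
        intro T hT
        simp only [mem_filter] at hT
        funext i
        by_cases h : i ≤ t
        · simp only [if_pos h]
        · simp only [if_neg h, if_pos (show t+1 ≤ i from Nat.not_le.mp h)]
      · -- right inverse
        intro x hx
        simp only [Finset.mem_product] at hx
        obtain ⟨hU, hV⟩ := hx
        rw [mem_chainFS] at hU hV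
        obtain ⟨u1, u2, u3, u4, u5, u6⟩ := hU
        obtain ⟨v1, v2, v3, v4, v5, v6⟩ := hV
        rw [Prod.ext_iff]
        constructor
        · funext i
          by_cases h : i ≤ t
          · simp only [if_pos h]
          · simp only [if_neg h]
            exact (u2 i (fun hc => h (mem_Icc.mp hc).2)).symm
        · funext i
          by_cases h : t+1 ≤ i
          · simp only [if_pos h, if_neg (show ¬ i ≤ t from Nat.not_le.mpr h)]
          · simp only [if_neg h]
            exact (v2 i (fun hc => h (mem_Icc.mp hc).1)).symm
    rw [hbij, Finset.card_product]
    have h1 : (chainFS e 1 t q.1 q.2.1).card = chiE e 1 t := by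
      have := card_chainFS e (t-1) 1 le_rfl q.1 q.2.1 q9 q5 (by rw [heq1]; exact q6)
      rw [heq1] at this
      rw [this, chiE]
    have h2 : (chainFS e (t+1) (p+1) q.2.2.1 q.2.2.2).card = chiE e (t+1) (p+1) := by
      have := card_chainFS e (p-t) (t+1) (Nat.succ_le_succ (Nat.zero_le t)) q.2.2.1 q.2.2.2 q11 q7
        (by rw [heq2]; exact q8)
      rw [heq2] at this
      rw [this, chiE]
    rw [h1, h2]
  rw [Finset.sum_congr rfl hfib, Finset.sum_const, smul_eq_mul]

/-- Counting coordinate subrepresentations of the preprojective representation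
`M_p^n(overline[1,t])` of the quiver of type `Ã_{p,1}`: the number of tuples
`(T_1, …, T_{p+1})` with `T_1, …, T_t ⊆ [1,n+1]`, `T_{t+1}, …, T_{p+1} ⊆ [1,n]`,
`|T_i| = e_i`, `T_{k+1} ⊆ T_k` for `1 ≤ k ≤ p`, and `{k+1 : k ∈ T_{p+1}} ⊆ T_1`
(encoded as functions `ℕ → Finset ℕ` vanishing outside `[1,p+1]`) equals
`C(e_1−1, e_{p+1}) · C(n+1−e_t, e_1−e_t) · C(n+1−e_{t+1}, e_t−e_{t+1}) ·
 C(n−e_{p+1}, e_{t+1}−e_{p+1}) · χ_e([1,t]) · χ_e([t+1,p+1])`. -/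
theorem card_coordinate_subreps_preprojective_Ap1 (p t n : ℕ)
    (hp : 2 ≤ p) (ht1 : 1 ≤ t) (htp : t ≤ p) (e : ℕ → ℕ) (he : 1 ≤ e 1) :
    Set.ncard {T : ℕ → Finset ℕ |
        (∀ i, 1 ≤ i → i ≤ t → T i ⊆ Finset.Icc 1 (n + 1)) ∧
        (∀ i, t + 1 ≤ i → i ≤ p + 1 → T i ⊆ Finset.Icc 1 n) ∧
        (∀ i, 1 ≤ i → i ≤ p + 1 → (T i).card = e i) ∧
        (∀ k, 1 ≤ k → k ≤ p → T (k + 1) ⊆ T k) ∧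
        (∀ m ∈ T (p + 1), m + 1 ∈ T 1) ∧
        (∀ i, i < 1 ∨ p + 1 < i → T i = ∅)}
      = intChoose ((e 1 : ℤ) - 1) (e (p + 1) : ℤ) *
        intChoose ((n : ℤ) + 1 - e t) ((e 1 : ℤ) - e t) *
        intChoose ((n : ℤ) + 1 - e (t + 1)) ((e t : ℤ) - e (t + 1)) *
        intChoose ((n : ℤ) - e (p + 1)) ((e (t + 1) : ℤ) - e (p + 1)) *
        chiE e 1 t * chiE e (t + 1) (p + 1) := by
  have hset : {T : ℕ → Finset ℕ |
        (∀ i, 1 ≤ i → i ≤ t → T i ⊆ Finset.Icc 1 (n + 1)) ∧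
        (∀ i, t + 1 ≤ i → i ≤ p + 1 → T i ⊆ Finset.Icc 1 n) ∧
        (∀ i, 1 ≤ i → i ≤ p + 1 → (T i).card = e i) ∧
        (∀ k, 1 ≤ k → k ≤ p → T (k + 1) ⊆ T k) ∧
        (∀ m ∈ T (p + 1), m + 1 ∈ T 1) ∧
        (∀ i, i < 1 ∨ p + 1 < i → T i = ∅)} = ↑(FS p t n e) := by
    ext T
    simp only [Set.mem_setOf_eq, Finset.mem_coe, mem_FS]
    constructor
    · rintro ⟨s1, s2, s3, s4, s5, s6⟩
      refine ⟨?_, ?_, ?_, ?_, ?_, s5⟩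
      · intro i hi
        rw [mem_Icc] at hi
        rcases le_or_gt i t with h | h
        · exact s1 i hi.1 h
        · exact (s2 i (by omega) hi.2).trans (Finset.Icc_subset_Icc le_rfl (by omega))
      · intro i hi
        rw [mem_Icc] at hi
        apply s6
        omega
      · intro i hi
        rw [mem_Icc] at hi
        exact s2 i hi.1 hi.2
      · intro i hi
        rw [mem_Icc] at hi
        exact s3 i hi.1 hi.2
      · intro k hk
        rw [mem_Icc] at hk
        exact s4 k hk.1 hk.2
    · rintro ⟨f1, f2, f3, f4, f5, f6⟩
      refine ⟨?_, ?_, ?_, ?_, f6, ?_⟩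
      · intro i h1 h2
        exact f1 i (by rw [mem_Icc]; omega)
      · intro i h1 h2
        exact f3 i (by rw [mem_Icc]; omega)
      · intro i h1 h2
        exact f4 i (by rw [mem_Icc]; omega)
      · intro k h1 h2
        exact f5 k (by rw [mem_Icc]; omega)
      · intro i hi
        exact f2 i (by rw [mem_Icc]; omega)
  rw [hset, Set.ncard_coe_finset, FS_card p t n e ht1 htp,
    HS_card n (e 1) (e t) (e (t+1)) (e (p+1)), GS_card n (e 1) (e (t+1)) (e (p+1)) he]
  have htri := intChoose_trinomial ((n:ℤ) + 1 - (e (t+1) : ℤ)) ((e 1 : ℤ) - (e (t+1) : ℤ))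
    ((e t : ℤ) - (e (t+1) : ℤ))
  rw [show ((n:ℤ) + 1 - (e (t+1):ℤ)) - ((e t:ℤ) - (e (t+1):ℤ)) = (n:ℤ) + 1 - e t by ring,
    show ((e 1:ℤ) - (e (t+1):ℤ)) - ((e t:ℤ) - (e (t+1):ℤ)) = (e 1:ℤ) - e t by ring] at htri
  calc intChoose ((e 1:ℤ)-1) (e (p+1)) * (intChoose ((n:ℤ)+1-(e (t+1))) ((e 1:ℤ)-(e (t+1)))
          * intChoose ((n:ℤ)-(e (p+1))) ((e (t+1):ℤ)-(e (p+1))))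
        * intChoose ((e 1:ℤ)-(e (t+1))) ((e t:ℤ)-(e (t+1)))
        * (chiE e 1 t * chiE e (t+1) (p+1))
      = (intChoose ((n:ℤ)+1-(e (t+1))) ((e 1:ℤ)-(e (t+1)))
          * intChoose ((e 1:ℤ)-(e (t+1))) ((e t:ℤ)-(e (t+1))))
        * (intChoose ((e 1:ℤ)-1) (e (p+1)) * intChoose ((n:ℤ)-(e (p+1))) ((e (t+1):ℤ)-(e (p+1)))
          * (chiE e 1 t * chiE e (t+1) (p+1))) := by ring
    _ = (intChoose ((n:ℤ)+1-(e (t+1))) ((e t:ℤ)-(e (t+1)))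
          * intChoose ((n:ℤ)+1-(e t)) ((e 1:ℤ)-(e t)))
        * (intChoose ((e 1:ℤ)-1) (e (p+1)) * intChoose ((n:ℤ)-(e (p+1))) ((e (t+1):ℤ)-(e (p+1)))
          * (chiE e 1 t * chiE e (t+1) (p+1))) := by rw [htri]
    _ = intChoose ((e 1 : ℤ) - 1) (e (p + 1)) *
        intChoose ((n : ℤ) + 1 - e t) ((e 1 : ℤ) - e t) *
        intChoose ((n : ℤ) + 1 - e (t + 1)) ((e t : ℤ) - e (t + 1)) *
        intChoose ((n : ℤ) - e (p + 1)) ((e (t + 1) : ℤ) - e (p + 1)) *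
        chiE e 1 t * chiE e (t + 1) (p + 1) := by ring
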